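/- Deterministic queue stabilization: let n, c, d be positive integers with log₂(nd) ≤ n and (c+1)·d ≤ 4·(cd)²·log n (log the natural logarithm), and let t ≥ 2n. Suppose (q_s)_{s=t−n}^{t} is a sequence of nonnegative reals such that q_{t−n} ≤ nd, q_{s+1} ≤ q_s + (c+1)·d for every s ∈ {t−n,…,t−1}, and for every s ∈ {t−n,…,t−1} either q_s ≤ 3·32·(cd)²·log n or q_{s+1} ≤ q_s/2. Then q_t ≤ 100·(cd)²·log n. -/
import Mathlib


/-- Deterministic queue stabilization: let `n, c, d` be positive
integers with `log₂(nd) ≤ n` and `(c+1)·d ≤ 4·(cd)²·log n` (`log` the natural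
logarithm), and let `t ≥ 2n`.  Suppose `(q_s)_{s=t−n}^{t}` is a sequence of
nonnegative reals such that `q_{t−n} ≤ nd`, `q_{s+1} ≤ q_s + (c+1)·d` for every
`s ∈ {t−n,…,t−1}`, and for every `s ∈ {t−n,…,t−1}` either
`q_s ≤ 3·32·(cd)²·log n` or `q_{s+1} ≤ q_s/2`.  Then
`q_t ≤ 100·(cd)²·log n`. -/
theorem deterministic_queue_stabilization
    (n c d : ℕ) (hn : 0 < n) (hc : 0 < c) (hd : 0 < d)
    (hlog2 : Real.logb 2 ((n : ℝ) * d) ≤ (n : ℝ))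
    (hcd : ((c : ℝ) + 1) * d ≤ 4 * ((c : ℝ) * d) ^ 2 * Real.log n)
    (t : ℕ) (ht : 2 * n ≤ t)
    (q : ℕ → ℝ)
    (hpos : ∀ s : ℕ, t - n ≤ s → s ≤ t → 0 ≤ q s)
    (hstart : q (t - n) ≤ (n : ℝ) * d)
    (hstep : ∀ s : ℕ, t - n ≤ s → s < t → q (s + 1) ≤ q s + ((c : ℝ) + 1) * d)
    (hhalf : ∀ s : ℕ, t - n ≤ s → s < t →
      q s ≤ 3 * 32 * ((c : ℝ) * d) ^ 2 * Real.log n ∨ q (s + 1) ≤ q s / 2) :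
    q t ≤ 100 * ((c : ℝ) * d) ^ 2 * Real.log n := by
  have hc1 : (1:ℝ) ≤ c := by exact_mod_cast hc
  have hd1 : (1:ℝ) ≤ d := by exact_mod_cast hd
  -- n ≥ 2
  have hn2 : (2:ℝ) ≤ n := by
    by_contra h
    push_neg at h
    have : n < 2 := by exact_mod_cast h
    have hn1 : n = 1 := by omega
    rw [hn1] at hcd
    simp [Real.log_one] at hcd
    nlinarith
  have hlogn : Real.log 2 ≤ Real.log n := Real.log_le_log (by norm_num) hn2
  have hlog2pos : (0:ℝ) < Real.log 2 := Real.log_pos (by norm_num)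
  have hlognpos : (0:ℝ) < Real.log n := lt_of_lt_of_le hlog2pos hlogn
  have hcd2 : (1:ℝ) ≤ ((c : ℝ) * d) ^ 2 := by nlinarith [mul_le_mul hc1 hd1 (by norm_num : (0:ℝ) ≤ 1) (by linarith : (0:ℝ) ≤ (c:ℝ))]
  have hXge : Real.log 2 ≤ ((c : ℝ) * d) ^ 2 * Real.log n := by
    nlinarith
  have h1le : (1:ℝ) ≤ 100 * ((c : ℝ) * d) ^ 2 * Real.log n := by
    nlinarith [Real.log_two_gt_d9]
  -- nd ≤ 2^n
  have hndpos : (0:ℝ) < (n:ℝ) * d := by positivity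
  have hnd2n : (n:ℝ) * d ≤ 2 ^ n := by
    have := (Real.logb_le_iff_le_rpow (by norm_num : (1:ℝ) < 2) hndpos).mp hlog2
    rwa [Real.rpow_natCast] at this
  have key : ∀ k, k ≤ n →
      q (t - n + k) ≤ max ((n:ℝ) * d / 2 ^ k) (100 * ((c : ℝ) * d) ^ 2 * Real.log n) := by
    intro k
    induction k with
    | zero =>
        intro _
        refine le_max_of_le_left ?_
        simpa using hstart
    | succ k ih =>
        intro hk
        have hk' := ih (by omega)
        have hs1 : t - n ≤ t - n + k := Nat.le_add_right _ _
        have hs2 : t - n + k < t := by omega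
        have heq : t - n + (k + 1) = (t - n + k) + 1 := by omega
        rw [heq]
        rcases hhalf _ hs1 hs2 with hb | hh
        · refine le_max_of_le_right ?_
          have hst := hstep _ hs1 hs2
          nlinarith
        · rcases le_max_iff.mp hk' with h1 | h1
          · refine le_max_of_le_left ?_
            rw [pow_succ]
            have h2k : (0:ℝ) < 2 ^ k := by positivity
            rw [div_mul_eq_div_div]
            linarith
          · refine le_max_of_le_right ?_
            have h0 : 0 ≤ q (t - n + k) := hpos _ hs1 (le_of_lt hs2)
            linarith
  have hkey := key n le_rfl
  rw [show t - n + n = t from by omega] at hkey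
  have hdiv : (n:ℝ) * d / 2 ^ n ≤ 1 := by
    rw [div_le_one (by positivity)]
    exact hnd2n
  rcases le_max_iff.mp hkey with h1 | h1
  · linarith
  · exact h1
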